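/- Every quotient of an abelian group of finite ℚ_p/ℤ_p-type is again of finite ℚ_p/ℤ_p-type. -/

import Mathlib

/-!
STATEMENT 2: Every quotient of an abelian group of finite `ℚ_p/ℤ_p`-type is again of
finite `ℚ_p/ℤ_p`-type.
-/

/-- The Prüfer `p`-group `ℚ_p/ℤ_p`, realized as the quotient of `ℚ_[p]` by `ℤ_[p]`. -/
def PruferGroup (p : ℕ) [Fact p.Prime] : Type :=
  ℚ_[p] ⧸ (AddMonoidHom.range (PadicInt.Coe.ringHom (p := p)).toAddMonoidHom)

noncomputable instance (p : ℕ) [Fact p.Prime] : AddCommGroup (PruferGroup p) :=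
  QuotientAddGroup.Quotient.addCommGroup _

/-- An abelian group is of finite `ℚ_p/ℤ_p`-type if it is isomorphic to
`(ℚ_p/ℤ_p)^r ⊕ F` for some `r : ℕ` and finite abelian group `F`. -/
def IsFiniteQpZpType (p : ℕ) [Fact p.Prime] (A : Type*) [AddCommGroup A] : Prop :=
  ∃ (r : ℕ) (F : Type) (_ : AddCommGroup F) (_ : Finite F),
    Nonempty (A ≃+ ((Fin r → PruferGroup p) × F))

namespace PruferAux

variable (p : ℕ) [hp : Fact p.Prime]

noncomputable def mkD : ℚ_[p] →+ PruferGroup p :=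
  QuotientAddGroup.mk' (AddMonoidHom.range (PadicInt.Coe.ringHom (p := p)).toAddMonoidHom)

lemma mkD_surjective : Function.Surjective (mkD p) :=
  QuotientAddGroup.mk'_surjective _

lemma mkD_eq_zero {x : ℚ_[p]} : mkD p x = 0 ↔ ‖x‖ ≤ 1 := by
  have h := QuotientAddGroup.eq_zero_iff
    (N := (AddMonoidHom.range (PadicInt.Coe.ringHom (p := p)).toAddMonoidHom)) x
  refine Iff.trans h ?_
  constructor
  · rintro ⟨a, rfl⟩
    exact a.2
  · intro h
    exact ⟨⟨x, h⟩, rfl⟩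

noncomputable instance : DivisibleBy (PruferGroup p) ℤ :=
  Function.Surjective.divisibleBy (mkD p) (mkD_surjective p) (fun _ _ => map_zsmul _ _ _)

lemma p_cast_ne_zero : (p : ℚ_[p]) ≠ 0 := by
  exact_mod_cast (Nat.cast_ne_zero (R := ℚ_[p])).2 hp.1.ne_zero

lemma one_lt_p : (1 : ℝ) < (p : ℝ) := by exact_mod_cast hp.1.one_lt

/-- torsion: every element is killed by some power of `p`. -/
lemma exists_pow_smul_eq_zero (y : PruferGroup p) : ∃ n : ℕ, (p : ℤ) ^ n • y = 0 := by
  obtain ⟨x, rfl⟩ := mkD_surjective p y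
  obtain ⟨n, hn⟩ := pow_unbounded_of_one_lt ‖x‖ (one_lt_p p)
  refine ⟨n, ?_⟩
  rw [← map_zsmul]
  rw [mkD_eq_zero]
  have : ((p : ℤ) ^ n : ℤ) • x = ((p : ℚ_[p]) ^ n) * x := by
    push_cast [zsmul_eq_mul]
    ring
  rw [this, norm_mul]
  have hnp : ‖(p : ℚ_[p]) ^ n‖ = ((p : ℝ) ^ n)⁻¹ := by
    rw [norm_pow, Padic.norm_p, inv_pow]
  rw [hnp]
  have hp0 : (0:ℝ) < (p:ℝ)^n := pow_pos (lt_trans zero_lt_one (one_lt_p p)) n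
  rw [inv_mul_le_iff₀ hp0, mul_one]
  exact hn.le

/-- the canonical generator of the `p^n`-torsion. -/
noncomputable def c (n : ℕ) : PruferGroup p := mkD p (((p : ℚ_[p]) ^ n)⁻¹)

noncomputable def K (n : ℕ) : AddSubgroup (PruferGroup p) := AddSubgroup.zmultiples (c p n)

lemma pow_smul_mkD (n : ℕ) (x : ℚ_[p]) :
    (p : ℤ) ^ n • mkD p x = mkD p ((p : ℚ_[p]) ^ n * x) := by
  rw [← map_zsmul]
  congr 1
  push_cast [zsmul_eq_mul]
  ring

lemma pow_smul_c (n : ℕ) : (p : ℤ) ^ n • c p n = 0 := by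
  rw [c, pow_smul_mkD, mul_inv_cancel₀ (pow_ne_zero _ (p_cast_ne_zero p)), mkD_eq_zero, norm_one]

lemma mem_K_iff {y : PruferGroup p} {n : ℕ} : y ∈ K p n ↔ (p : ℤ) ^ n • y = 0 := by
  constructor
  · rintro ⟨k, rfl⟩
    rw [smul_comm, pow_smul_c, smul_zero]
  · obtain ⟨x, rfl⟩ := mkD_surjective p y
    intro h
    rw [pow_smul_mkD, mkD_eq_zero] at h
    set a : ℤ_[p] := ⟨(p : ℚ_[p]) ^ n * x, h⟩ with ha
    obtain ⟨t, ht⟩ := Ideal.mem_span_singleton'.1 (PadicInt.appr_spec n a)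
    -- a - appr a n = t * p^n
    have hxa : (a : ℚ_[p]) = (p : ℚ_[p]) ^ n * x := rfl
    have h2 := congrArg (fun z : ℤ_[p] => (z : ℚ_[p])) ht
    push_cast at h2
    have hpn : (p : ℚ_[p]) ^ n ≠ 0 := pow_ne_zero n (p_cast_ne_zero p)
    have hx : x = (PadicInt.appr a n : ℚ_[p]) * ((p : ℚ_[p]) ^ n)⁻¹
        + ((t : ℚ_[p])) := by
      field_simp
      linear_combination -h2
    refine ⟨(PadicInt.appr a n : ℤ), ?_⟩
    show (PadicInt.appr a n : ℤ) • c p n = mkD p x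
    rw [hx, map_add, c, ← map_zsmul]
    have ht0 : mkD p (t : ℚ_[p]) = 0 := (mkD_eq_zero p).2 t.2
    rw [ht0, add_zero]
    congr 1


lemma pow_smul_c_ne {n j : ℕ} (hj : j < n) : (p : ℤ) ^ j • c p n ≠ 0 := by
  rw [Ne, c, pow_smul_mkD, mkD_eq_zero, not_le, norm_mul, norm_inv, norm_pow, norm_pow,
    Padic.norm_p, inv_pow, inv_pow, inv_inv, ← div_eq_inv_mul, lt_div_iff₀
      (pow_pos (lt_trans zero_lt_one (one_lt_p p)) j), one_mul]
  exact pow_lt_pow_right₀ (one_lt_p p) hj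

lemma c_ne_zero {n : ℕ} (hn : 0 < n) : c p n ≠ 0 := by
  have := pow_smul_c_ne p (j := 0) hn
  simpa using this

lemma addOrderOf_c (n : ℕ) : addOrderOf (c p n) = p ^ n := by
  have h1 : (p ^ n : ℕ) • c p n = 0 := by
    have := pow_smul_c p n
    rw [← natCast_zsmul]
    push_cast
    exact this
  have hdvd : addOrderOf (c p n) ∣ p ^ n := addOrderOf_dvd_of_nsmul_eq_zero h1
  obtain ⟨j, hj, hje⟩ := (Nat.dvd_prime_pow hp.1).1 hdvd
  rcases lt_or_eq_of_le hj with hlt | rfl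
  · exfalso
    apply pow_smul_c_ne p hlt
    have : (p ^ j : ℕ) • c p n = 0 := by
      rw [← hje]
      exact addOrderOf_nsmul_eq_zero _
    rw [← natCast_zsmul] at this
    push_cast at this
    exact this
  · exact hje

lemma card_K (n : ℕ) : Nat.card (K p n) = p ^ n := by
  rw [K, Nat.card_zmultiples, addOrderOf_c]

lemma finite_K (n : ℕ) : Finite (K p n) := by
  refine Nat.finite_of_card_ne_zero ?_
  rw [card_K]
  exact pow_ne_zero _ hp.1.ne_zero

lemma zmultiples_eq_K {y : PruferGroup p} {n : ℕ} (h1 : (p : ℤ) ^ n • y = 0)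
    (h2 : ∀ m < n, (p : ℤ) ^ m • y ≠ 0) : AddSubgroup.zmultiples y = K p n := by
  have hord : addOrderOf y = p ^ n := by
    have h1' : (p ^ n : ℕ) • y = 0 := by
      rw [← natCast_zsmul]; push_cast; exact h1
    obtain ⟨j, hj, hje⟩ := (Nat.dvd_prime_pow hp.1).1 (addOrderOf_dvd_of_nsmul_eq_zero h1')
    rcases lt_or_eq_of_le hj with hlt | rfl
    · exfalso
      apply h2 j hlt
      have : (p ^ j : ℕ) • y = 0 := by rw [← hje]; exact addOrderOf_nsmul_eq_zero _
      rw [← natCast_zsmul] at this; push_cast at this; exact this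
    · exact hje
  have hle : AddSubgroup.zmultiples y ≤ K p n := by
    rintro _ ⟨k, rfl⟩
    rw [mem_K_iff, smul_comm, h1, smul_zero]
  have : Finite (K p n) := finite_K p n
  refine AddSubgroup.eq_of_le_of_card_ge hle ?_
  rw [card_K, Nat.card_zmultiples, hord]

/-- Classification of subgroups of the Prüfer group. -/
lemma subgroup_classification (H : AddSubgroup (PruferGroup p)) :
    H = ⊤ ∨ ∃ n, H = K p n := by
  -- for any nonzero torsion bound on an element, its multiples give a K m
  have key : ∀ y : PruferGroup p, ∃ m : ℕ, AddSubgroup.zmultiples y = K p m ∧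
      (p : ℤ) ^ m • y = 0 ∧ ∀ k < m, (p : ℤ) ^ k • y ≠ 0 := by
    intro y
    have hex := exists_pow_smul_eq_zero p y
    classical
    let m := Nat.find hex
    exact ⟨m, zmultiples_eq_K p (Nat.find_spec hex) (fun k hk => Nat.find_min hex hk),
      Nat.find_spec hex, fun k hk => Nat.find_min hex hk⟩
  by_cases hbdd : ∃ N : ℕ, ∀ y ∈ H, (p : ℤ) ^ N • y = 0
  · right
    classical
    let N := Nat.find hbdd
    refine ⟨N, ?_⟩
    have hNspec : ∀ y ∈ H, (p : ℤ) ^ N • y = 0 := Nat.find_spec hbdd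
    have hle : H ≤ K p N := fun y hy => (mem_K_iff p).2 (hNspec y hy)
    rcases Nat.eq_zero_or_pos N with hN0 | hNpos
    · refine le_antisymm hle ?_
      have : ∀ y ∈ H, y = 0 := by
        intro y hy
        have := hNspec y hy
        rw [hN0] at this
        simpa using this
      intro z hz
      rcases (mem_K_iff p).1 hz with h
      rw [hN0] at h
      simp only [pow_zero, one_smul] at h
      subst h
      exact H.zero_mem
    · -- minimality gives an element of exact order p^N in H
      have hmin : ¬ ∀ y ∈ H, (p : ℤ) ^ (N - 1) • y = 0 :=
        Nat.find_min hbdd (Nat.sub_lt hNpos one_pos)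
      push_neg at hmin
      obtain ⟨y, hyH, hy⟩ := hmin
      obtain ⟨m, hzm, hm0, hmne⟩ := key y
      have hmN : m = N := by
        have h1 : m ≤ N := by
          by_contra hcon
          push_neg at hcon
          exact hmne N hcon (hNspec y hyH)
        have h2 : N - 1 < m := by
          by_contra hcon
          push_neg at hcon
          apply hy
          have : (p : ℤ) ^ (N - 1) = (p : ℤ) ^ (N - 1 - m) * (p : ℤ) ^ m := by
            rw [← pow_add]
            congr 1
            omega
          rw [this, mul_smul, hm0, smul_zero]
        omega
      refine le_antisymm hle ?_
      rw [← hmN, ← hzm]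
      rintro _ ⟨k, rfl⟩
      exact H.zsmul_mem hyH k
  · left
    push_neg at hbdd
    rw [eq_top_iff]
    intro z _
    obtain ⟨k, hk⟩ := exists_pow_smul_eq_zero p z
    obtain ⟨y, hyH, hy⟩ := hbdd k
    obtain ⟨m, hzm, hm0, _⟩ := key y
    have hkm : k ≤ m := by
      by_contra hcon
      push_neg at hcon
      apply hy
      have : (p : ℤ) ^ k = (p : ℤ) ^ (k - m) * (p : ℤ) ^ m := by
        rw [← pow_add]; congr 1; omega
      rw [this, mul_smul, hm0, smul_zero]
    have hzK : z ∈ K p m := by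
      rw [mem_K_iff]
      have : (p : ℤ) ^ m = (p : ℤ) ^ (m - k) * (p : ℤ) ^ k := by
        rw [← pow_add]; congr 1; omega
      rw [this, mul_smul, hk, smul_zero]
    rw [← hzm] at hzK
    obtain ⟨j, rfl⟩ := hzK
    exact H.zsmul_mem hyH j


/-- multiplication by `p^n` as a hom. -/
noncomputable def psmul (n : ℕ) : PruferGroup p →+ PruferGroup p :=
  AddMonoidHom.mk' (fun y => (p : ℤ) ^ n • y) (fun a b => smul_add _ a b)

lemma psmul_surjective (n : ℕ) : Function.Surjective (psmul p n) :=
  DivisibleBy.surjective_smul (PruferGroup p) ℤ (n := (p : ℤ) ^ n)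
    (pow_ne_zero _ (by exact_mod_cast hp.1.ne_zero))

lemma ker_psmul (n : ℕ) : (psmul p n).ker = K p n := by
  ext y
  rw [AddMonoidHom.mem_ker, mem_K_iff]
  rfl

/-- Every quotient of the Prüfer group is trivial or the Prüfer group itself. -/
lemma quot_of_prufer {M : Type*} [AddCommGroup M] (f : PruferGroup p →+ M)
    (hf : Function.Surjective f) :
    Subsingleton M ∨ Nonempty (M ≃+ PruferGroup p) := by
  rcases subgroup_classification p f.ker with hker | ⟨n, hker⟩
  · left
    constructor
    intro a b
    obtain ⟨x, rfl⟩ := hf a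
    obtain ⟨y, rfl⟩ := hf b
    have hx : x ∈ f.ker := hker ▸ AddSubgroup.mem_top x
    have hy : y ∈ f.ker := hker ▸ AddSubgroup.mem_top y
    rw [AddMonoidHom.mem_ker] at hx hy
    rw [hx, hy]
  · right
    have e1 := QuotientAddGroup.quotientKerEquivOfSurjective f hf
    have e2 := QuotientAddGroup.quotientKerEquivOfSurjective (psmul p n) (psmul_surjective p n)
    have e3 : (PruferGroup p ⧸ f.ker) ≃+ (PruferGroup p ⧸ (psmul p n).ker) :=
      QuotientAddGroup.quotientAddEquivOfEq (by rw [hker, ker_psmul])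
    exact ⟨e1.symm.trans (e3.trans e2)⟩

end PruferAux

section Split

/-- A subgroup that is divisible splits off as a direct summand. -/
lemma divisible_subgroup_splits {M : Type*} [AddCommGroup M] (N : AddSubgroup M)
    [DivisibleBy N ℤ] : Nonempty (M ≃+ N × (M ⧸ N)) := by
  have baer : Module.Baer ℤ N := Module.Baer.of_divisible N
  have inj : Module.Injective ℤ N := baer.injective
  obtain ⟨h, hh⟩ := inj.out (N.subtype.toIntLinearMap)
    (by exact Subtype.coe_injective) LinearMap.id
  -- h : M →ₗ[ℤ] N  with h n = n for n ∈ N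
  let φ : M →+ (N × (M ⧸ N)) := (h.toAddMonoidHom).prod (QuotientAddGroup.mk' N)
  have hφ : Function.Bijective φ := by
    constructor
    · intro a b hab
      simp only [φ, AddMonoidHom.prod_apply, Prod.mk.injEq] at hab
      obtain ⟨h1, h2⟩ := hab
      have hmem : a - b ∈ N := (QuotientAddGroup.eq_iff_sub_mem).1 h2
      have hv := hh ⟨a - b, hmem⟩
      simp only [LinearMap.id_apply] at hv
      have h0 : h (a - b) = 0 := by
        rw [map_sub]
        exact sub_eq_zero_of_eq h1
      have hz : (⟨a - b, hmem⟩ : N) = 0 := by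
        rw [← hv]
        exact h0
      have : a - b = 0 := congrArg Subtype.val hz
      exact sub_eq_zero.1 this
    · rintro ⟨n, q⟩
      obtain ⟨y, rfl⟩ := QuotientAddGroup.mk'_surjective N q
      refine ⟨y + ((n - h y : N) : M), ?_⟩
      simp only [φ, AddMonoidHom.prod_apply, Prod.mk.injEq]
      constructor
      · have hval := hh (n - h y)
        simp only [LinearMap.id_apply] at hval
        rw [map_add]
        rw [show h.toAddMonoidHom ((( n - h y : N) : M)) = n - h y from hval]
        show h y + (n - h y) = n
        abel
      · rw [map_add]
        have : (QuotientAddGroup.mk' N) (((n - h y : N) : M)) = 0 := by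
          rw [QuotientAddGroup.mk'_apply, QuotientAddGroup.eq_zero_iff]
          exact (n - h y).2
        rw [this, add_zero]
  exact ⟨AddEquiv.ofBijective φ hφ⟩

end Split

section Induction

universe u

variable (p : ℕ) [hp : Fact p.Prime]

/-- `Fin (r+1) → β` splits as a product. -/
def piSuccEquiv (r : ℕ) (β : Type*) [AddCommGroup β] :
    (Fin (r + 1) → β) ≃+ β × (Fin r → β) :=
  { (Fin.consEquiv fun _ => β).symm with map_add' := fun _ _ => rfl }

noncomputable def divisibleBy_range {A B : Type*} [AddCommGroup A] [AddCommGroup B] [DivisibleBy A ℤ]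
    (g : A →+ B) : DivisibleBy g.range ℤ :=
  Function.Surjective.divisibleBy g.rangeRestrict g.rangeRestrict_surjective
    (fun _ _ => map_zsmul _ _ _)

open PruferAux in
lemma quot_of_pi_prufer : ∀ (r : ℕ) {M : Type u} [AddCommGroup M]
    (f : (Fin r → PruferGroup p) →+ M), Function.Surjective f →
    ∃ s : ℕ, Nonempty (M ≃+ (Fin s → PruferGroup p)) := by
  intro r
  induction r with
  | zero =>
    intro M _ f hf
    have hsub : Subsingleton M := by
      constructor
      intro a b
      obtain ⟨x, rfl⟩ := hf a
      obtain ⟨y, rfl⟩ := hf b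
      rw [Subsingleton.elim x y]
    letI : Inhabited M := ⟨f 0⟩
    letI : Unique M := Unique.mk' M
    exact ⟨0, ⟨AddEquiv.ofUnique⟩⟩
  | succ r ih =>
    intro M _ f hf
    let eD := (piSuccEquiv r (PruferGroup p)).symm
    let g : (PruferGroup p × (Fin r → PruferGroup p)) →+ M := f.comp eD.toAddMonoidHom
    have hg : Function.Surjective g := hf.comp eD.surjective
    let g1 := g.comp (AddMonoidHom.inr (PruferGroup p) (Fin r → PruferGroup p))
    let N := g1.range
    letI : DivisibleBy N ℤ := divisibleBy_range g1
    obtain ⟨e2⟩ := divisible_subgroup_splits N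
    obtain ⟨s, ⟨e3⟩⟩ := ih g1.rangeRestrict g1.rangeRestrict_surjective
    let φ : PruferGroup p →+ M ⧸ N :=
      (QuotientAddGroup.mk' N).comp (g.comp (AddMonoidHom.inl _ _))
    have hφ : Function.Surjective φ := by
      intro q
      obtain ⟨y, rfl⟩ := QuotientAddGroup.mk'_surjective N q
      obtain ⟨⟨d, v⟩, rfl⟩ := hg y
      refine ⟨d, ?_⟩
      have hmem : g (d, 0) - g (d, v) ∈ N := by
        refine ⟨-v, ?_⟩
        show g (0, -v) = g (d, 0) - g (d, v)
        rw [← map_sub]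
        congr 1
        rw [Prod.mk_sub_mk, sub_self, zero_sub]
      exact (QuotientAddGroup.eq_iff_sub_mem).2 hmem
    rcases quot_of_prufer p φ hφ with hsub | he4
    · refine ⟨s, ⟨?_⟩⟩
      letI : Inhabited (M ⧸ N) := ⟨0⟩
      letI : Unique (M ⧸ N) := Unique.mk' _
      exact e2.trans ((AddEquiv.prodUnique).trans e3)
    · obtain ⟨e4⟩ := he4
      refine ⟨s + 1, ⟨?_⟩⟩
      exact e2.trans ((AddEquiv.prodCongr e3 e4).trans
        ((AddEquiv.prodComm).trans (piSuccEquiv s (PruferGroup p)).symm))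

end Induction


theorem quotient_of_finite_QpZp_type (p : ℕ) [Fact p.Prime]
    (A B : Type*) [AddCommGroup A] [AddCommGroup B]
    (hA : IsFiniteQpZpType p A) (f : A →+ B) (hf : Function.Surjective f) :
    IsFiniteQpZpType p B := by
  obtain ⟨r, F, _, _, ⟨eA⟩⟩ := hA
  let g : ((Fin r → PruferGroup p) × F) →+ B := f.comp eA.symm.toAddMonoidHom
  have hg : Function.Surjective g := hf.comp eA.symm.surjective
  let g1 := g.comp (AddMonoidHom.inl (Fin r → PruferGroup p) F)
  let N := g1.range
  letI : DivisibleBy N ℤ := divisibleBy_range g1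
  obtain ⟨e2⟩ := divisible_subgroup_splits N
  obtain ⟨s, ⟨e3⟩⟩ := quot_of_pi_prufer p r g1.rangeRestrict g1.rangeRestrict_surjective
  let ψ : F →+ B ⧸ N := (QuotientAddGroup.mk' N).comp (g.comp (AddMonoidHom.inr _ _))
  have hψ : Function.Surjective ψ := by
    intro q
    obtain ⟨y, rfl⟩ := QuotientAddGroup.mk'_surjective N q
    obtain ⟨⟨v, x⟩, rfl⟩ := hg y
    refine ⟨x, ?_⟩
    have hmem : g (0, x) - g (v, x) ∈ N := by
      refine ⟨-v, ?_⟩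
      show g (-v, 0) = g (0, x) - g (v, x)
      rw [← map_sub]
      congr 1
      rw [Prod.mk_sub_mk, sub_self, zero_sub]
    exact (QuotientAddGroup.eq_iff_sub_mem).2 hmem
  have hfin : Finite (B ⧸ N) := Finite.of_surjective ψ hψ
  have hsmall : Small.{0} (B ⧸ N) := inferInstance
  have hfin' : Finite (Shrink.{0} (B ⧸ N)) := Finite.of_equiv _ (equivShrink _)
  refine ⟨s, Shrink.{0} (B ⧸ N), inferInstance, hfin', ⟨?_⟩⟩
  exact e2.trans (AddEquiv.prodCongr e3 (Shrink.addEquiv).symm)
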